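/- There exists a model p₀ of the knowledge base K = (P_B, 𝕊) such that P_{p₀}(c) = Σ over worlds W with O_W ⊨ c of P_B(W); in particular, the infimum defining P_K(c) is attained (it is a minimum). -/

import Mathlib

open scoped ENNReal

namespace BL

variable {I A C V : Type*}

/-- A world `W` satisfies the context `κ` if it agrees with `κ` wherever it is defined. -/
def SatCtx (W : V → Bool) (κ : V → Option Bool) : Prop :=
  ∀ v b, κ v = some b → W v = b

/-- The ontology induced by the world `W` from the `V`-ontology `𝕊`. -/
def OW (𝕊 : Finset (A × (V → Option Bool))) (W : V → Bool) : Set A :=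
  {α | ∃ κ, (α, κ) ∈ 𝕊 ∧ SatCtx W κ}

/-- `i` is a model of the ontology `O`. -/
def IsOntModel (satA : I → A → Prop) (O : Set A) (i : I) : Prop :=
  ∀ α ∈ O, satA i α

/-- The ontology `O` entails the consequence `c`. -/
def Entails (satA : I → A → Prop) (satC : I → C → Prop) (O : Set A) (c : C) : Prop :=
  ∀ i : I, IsOntModel satA O i → satC i c

/-- A probabilistic interpretation `p` (a finitely supported PMF on pairs of an
interpretation and a world) is a model of the knowledge base `(PB, 𝕊)`. -/
def IsKBModel (satA : I → A → Prop) (PB : PMF (V → Bool))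
    (𝕊 : Finset (A × (V → Option Bool))) (p : PMF (I × (V → Bool))) : Prop :=
  p.support.Finite ∧
    (∀ iW ∈ p.support, IsOntModel satA (OW 𝕊 iW.2) iW.1) ∧
    ∀ W : V → Bool, ∑' i : I, p (i, W) = PB W

/-- `P_p(c)`: the probability of the consequence `c` w.r.t. `p`. -/
noncomputable def Pp (satC : I → C → Prop) (p : PMF (I × (V → Bool))) (c : C) : ℝ≥0∞ :=
  ∑' iW : I × (V → Bool), {x : I × (V → Bool) | satC x.1 c}.indicator (⇑p) iW

/-- `P_K(c)`: the infimum of `P_p(c)` over all models `p` of the knowledge base. -/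
noncomputable def PK (satA : I → A → Prop) (satC : I → C → Prop) (PB : PMF (V → Bool))
    (𝕊 : Finset (A × (V → Option Bool))) (c : C) : ℝ≥0∞ :=
  sInf {x : ℝ≥0∞ | ∃ p : PMF (I × (V → Bool)), IsKBModel satA PB 𝕊 p ∧ x = Pp satC p c}

/-- the infimum defining `P_K(c)` is attained: there is a model `p₀` of the
knowledge base with `P_{p₀}(c) = Σ_{O_W ⊨ c} P_B(W)`, and `p₀` realizes the minimum. -/
theorem probabilistic_entailment_attained [Fintype V]
    (satA : I → A → Prop) (satC : I → C → Prop)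
    (PB : PMF (V → Bool)) (𝕊 : Finset (A × (V → Option Bool))) (c : C)
    (hmod : ∀ W : V → Bool, ∃ i : I, IsOntModel satA (OW 𝕊 W) i) :
    ∃ p₀ : PMF (I × (V → Bool)), IsKBModel satA PB 𝕊 p₀ ∧
      Pp satC p₀ c
        = (∑' W : V → Bool,
            {W : V → Bool | Entails satA satC (OW 𝕊 W) c}.indicator (⇑PB) W) ∧
      ∀ p : PMF (I × (V → Bool)), IsKBModel satA PB 𝕊 p → Pp satC p₀ c ≤ Pp satC p c := by
  classical
  have hpick : ∀ W : V → Bool, ∃ i : I, IsOntModel satA (OW 𝕊 W) i ∧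
      (¬ Entails satA satC (OW 𝕊 W) c → ¬ satC i c) := by
    intro W
    by_cases h : Entails satA satC (OW 𝕊 W) c
    · obtain ⟨i, hi⟩ := hmod W
      exact ⟨i, hi, fun h' => absurd h h'⟩
    · simp only [Entails, not_forall] at h
      obtain ⟨i, hi, hic⟩ := h
      exact ⟨i, hi, fun _ => hic⟩
  choose f hf1 hf2 using hpick
  set g : (V → Bool) → I × (V → Bool) := fun W => (f W, W) with hg
  have happ : ∀ i W, (PB.map g) (i, W) = if i = f W then PB W else 0 := by
    intro i W
    rw [PMF.map_apply]
    rw [tsum_eq_single W]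
    · simp [hg, Prod.ext_iff]
    · intro W' hW'
      rw [if_neg]
      simp only [hg, Prod.ext_iff]
      rintro ⟨-, rfl⟩
      exact hW' rfl
  have hPp : ∀ p : PMF (I × (V → Bool)), Pp satC p c
      = ∑' W : V → Bool, ∑' i : I,
        {x : I × (V → Bool) | satC x.1 c}.indicator (⇑p) (i, W) := by
    intro p
    rw [Pp, ENNReal.tsum_prod', ENNReal.tsum_comm]
  have hKB : IsKBModel satA PB 𝕊 (PB.map g) := by
    refine ⟨?_, ?_, ?_⟩
    · exact Set.Finite.subset (Set.finite_range g) (by rw [PMF.support_map]; exact Set.image_subset_range _ _)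
    · intro iW hiW
      rw [PMF.support_map] at hiW
      obtain ⟨W, -, rfl⟩ := hiW
      exact hf1 W
    · intro W
      rw [tsum_eq_single (f W)]
      · rw [happ, if_pos rfl]
      · intro i hi
        rw [happ, if_neg hi]
  have hinner : ∀ W : V → Bool,
      (∑' i : I, {x : I × (V → Bool) | satC x.1 c}.indicator (⇑(PB.map g)) (i, W))
        = {W : V → Bool | Entails satA satC (OW 𝕊 W) c}.indicator (⇑PB) W := by
    intro W
    rw [tsum_eq_single (f W)]
    · by_cases hE : Entails satA satC (OW 𝕊 W) c
      · have hsc : (f W, W) ∈ {x : I × (V → Bool) | satC x.1 c} := hE (f W) (hf1 W)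
        have hE' : W ∈ {W : V → Bool | Entails satA satC (OW 𝕊 W) c} := hE
        rw [Set.indicator_of_mem hsc, Set.indicator_of_mem hE', happ, if_pos rfl]
      · have hsc : (f W, W) ∉ {x : I × (V → Bool) | satC x.1 c} := hf2 W hE
        have hE' : W ∉ {W : V → Bool | Entails satA satC (OW 𝕊 W) c} := hE
        rw [Set.indicator_of_notMem hsc, Set.indicator_of_notMem hE']
    · intro i hi
      rw [Set.indicator_apply]
      split
      · rw [happ, if_neg hi]
      · rfl
  refine ⟨PB.map g, hKB, ?_, ?_⟩
  · rw [hPp]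
    exact tsum_congr hinner
  · intro p hp
    obtain ⟨-, hsupp, hcons⟩ := hp
    rw [hPp (PB.map g), hPp p, tsum_congr hinner]
    refine ENNReal.tsum_le_tsum fun W => ?_
    by_cases hE : Entails satA satC (OW 𝕊 W) c
    · have hE' : W ∈ {W : V → Bool | Entails satA satC (OW 𝕊 W) c} := hE
      rw [Set.indicator_of_mem hE']
      have : ∀ i : I, {x : I × (V → Bool) | satC x.1 c}.indicator (⇑p) (i, W) = p (i, W) := by
        intro i
        rw [Set.indicator_apply]
        split_ifs with h
        · rfl
        · by_contra hne
          have hmem : (i, W) ∈ p.support := by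
            rw [PMF.mem_support_iff]
            intro h0
            exact hne (h0 ▸ rfl)
          exact h (hE i (hsupp _ hmem))
      rw [tsum_congr this, hcons W]
    · have hE' : W ∉ {W : V → Bool | Entails satA satC (OW 𝕊 W) c} := hE
      rw [Set.indicator_of_notMem hE']
      exact zero_le


end BL
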